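/- Let (Z_i, τ_i)_{i∈ℕ} be an i.i.d. sequence of pairs of real random variables on a probability space (Ω, 𝓕, P) with τ_0 > 0 almost surely, E[τ_0²] < ∞ and E[Z_0²] < ∞. Set r := E[Z_0]/E[τ_0] and σ² := E[(Z_0 − r·τ_0)²]/(E[τ_0])². For each n let τ̄_n := n^{−1} Σ_{i=0}^{n−1} τ_i, f̄_n := (Σ_{i=0}^{n−1} Z_i)/(Σ_{i=0}^{n−1} τ_i), and define the estimator σ̂_n² := ( Σ_{i=0}^{n−1} (Z_i − f̄_n τ_i)² ) / ( n · τ̄_n² ). Then σ̂_n² → σ² almost surely as n → ∞. -/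

import Mathlib

open MeasureTheory ProbabilityTheory Filter Topology

/-- **Consistency of the asymptotic-variance estimator.**
For an i.i.d. sequence of pairs `(Z i, τ i)` with `τ 0 > 0` a.s. and square-integrable
components, with `r = E[Z 0]/E[τ 0]` and `σ² = E[(Z 0 - r τ 0)²]/(E[τ 0])²`, the estimator
`σ̂²_n = (∑_{i<n} (Z i - f̄_n τ i)²)/(n τ̄_n²)` (where `τ̄_n = n⁻¹ ∑_{i<n} τ i` and
`f̄_n = (∑_{i<n} Z i)/(∑_{i<n} τ i)`) converges to `σ²` almost surely. -/
theorem restore_variance_estimator_consistent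
    {Ω : Type*} [MeasurableSpace Ω] (P : Measure Ω) [IsProbabilityMeasure P]
    (Z τ : ℕ → Ω → ℝ)
    (hmeas : ∀ i, Measurable (fun ω => (Z i ω, τ i ω)))
    (hindep : iIndepFun (fun i ω => (Z i ω, τ i ω)) P)
    (hident : ∀ i, IdentDistrib (fun ω => (Z i ω, τ i ω)) (fun ω => (Z 0 ω, τ 0 ω)) P P)
    (hτpos : ∀ᵐ ω ∂P, 0 < τ 0 ω)
    (hτ2 : Integrable (fun ω => (τ 0 ω) ^ 2) P)
    (hZ2 : Integrable (fun ω => (Z 0 ω) ^ 2) P)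
    (r : ℝ) (hr : r = (∫ ω, Z 0 ω ∂P) / (∫ ω, τ 0 ω ∂P))
    (σ2 : ℝ) (hσ2 : σ2 = (∫ ω, (Z 0 ω - r * τ 0 ω) ^ 2 ∂P) / (∫ ω, τ 0 ω ∂P) ^ 2)
    (τbar : ℕ → Ω → ℝ) (hτbar : ∀ n ω, τbar n ω = (n : ℝ)⁻¹ * ∑ i ∈ Finset.range n, τ i ω)
    (fbar : ℕ → Ω → ℝ)
    (hfbar : ∀ n ω, fbar n ω =
      (∑ i ∈ Finset.range n, Z i ω) / (∑ i ∈ Finset.range n, τ i ω))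
    (σhat2 : ℕ → Ω → ℝ)
    (hσhat2 : ∀ n ω, σhat2 n ω =
      (∑ i ∈ Finset.range n, (Z i ω - fbar n ω * τ i ω) ^ 2) / ((n : ℝ) * (τbar n ω) ^ 2)) :
    ∀ᵐ ω ∂P, Tendsto (fun n : ℕ => σhat2 n ω) atTop (𝓝 σ2) := by
  -- basic measurability
  have hZm : ∀ i, Measurable (Z i) := fun i => (measurable_fst.comp (hmeas i))
  have hτm : ∀ i, Measurable (τ i) := fun i => (measurable_snd.comp (hmeas i))
  -- SLLN for measurable functions of the pairs
  have slln : ∀ g : ℝ × ℝ → ℝ, Measurable g →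
      Integrable (fun ω => g (Z 0 ω, τ 0 ω)) P →
      ∀ᵐ ω ∂P, Tendsto (fun n : ℕ => (∑ i ∈ Finset.range n, g (Z i ω, τ i ω)) / n) atTop
        (𝓝 (∫ ω, g (Z 0 ω, τ 0 ω) ∂P)) := by
    intro g hg hint
    exact strong_law_ae_real (fun i ω => g (Z i ω, τ i ω)) hint
      (fun i j hij => (hindep.indepFun hij).comp hg hg)
      (fun i => (hident i).comp hg)
  -- integrability facts
  have hτint : Integrable (τ 0) P := by
    refine Integrable.mono' ((integrable_const (1:ℝ)).add hτ2) (hτm 0).aestronglyMeasurable ?_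
    filter_upwards with ω
    simp only [Real.norm_eq_abs, Pi.add_apply]
    nlinarith [sq_nonneg (|τ 0 ω| - 1), sq_abs (τ 0 ω), abs_nonneg (τ 0 ω)]
  have hZint : Integrable (Z 0) P := by
    refine Integrable.mono' ((integrable_const (1:ℝ)).add hZ2) (hZm 0).aestronglyMeasurable ?_
    filter_upwards with ω
    simp only [Real.norm_eq_abs, Pi.add_apply]
    nlinarith [sq_nonneg (|Z 0 ω| - 1), sq_abs (Z 0 ω), abs_nonneg (Z 0 ω)]
  have hZτint : Integrable (fun ω => Z 0 ω * τ 0 ω) P := by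
    refine Integrable.mono' (hZ2.add hτ2) ((hZm 0).mul (hτm 0)).aestronglyMeasurable ?_
    filter_upwards with ω
    simp only [Real.norm_eq_abs, abs_mul, Pi.add_apply]
    nlinarith [sq_nonneg (|Z 0 ω| - |τ 0 ω|), sq_abs (Z 0 ω), sq_abs (τ 0 ω),
      abs_nonneg (Z 0 ω), abs_nonneg (τ 0 ω)]
  -- the mean of τ is positive
  set m : ℝ := ∫ ω, τ 0 ω ∂P with hm
  have hmpos : 0 < m := by
    rcases lt_or_eq_of_le (integral_nonneg_of_ae (hτpos.mono fun ω h => h.le)) with h | h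
    · exact h
    · exfalso
      have h0 : (fun ω => τ 0 ω) =ᵐ[P] 0 :=
        (integral_eq_zero_iff_of_nonneg_ae (hτpos.mono fun ω h => h.le) hτint).1 h.symm
      have : ∀ᵐ ω ∂P, False := by
        filter_upwards [hτpos, h0] with ω h1 h2
        rw [h2] at h1; exact lt_irrefl 0 h1
      have hP0 : P = 0 := by simpa using this
      exact (IsProbabilityMeasure.ne_zero P) hP0
  have hmne : m ≠ 0 := hmpos.ne'
  -- the five SLLN statements
  have hA := slln (fun p => p.1 ^ 2) (measurable_fst.pow_const 2) hZ2
  have hB := slln (fun p => p.1 * p.2) (measurable_fst.mul measurable_snd) hZτint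
  have hC := slln (fun p => p.2 ^ 2) (measurable_snd.pow_const 2) hτ2
  have hD := slln (fun p => p.1) measurable_fst hZint
  have hE := slln (fun p => p.2) measurable_snd hτint
  set A : ℝ := ∫ ω, Z 0 ω ^ 2 ∂P
  set B : ℝ := ∫ ω, Z 0 ω * τ 0 ω ∂P
  set C : ℝ := ∫ ω, τ 0 ω ^ 2 ∂P
  set EZ : ℝ := ∫ ω, Z 0 ω ∂P
  -- identify σ² with the expanded expression
  have hσ2' : σ2 = (A - 2 * r * B + r ^ 2 * C) / m ^ 2 := by
    rw [hσ2]
    congr 1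
    have heq : (fun ω => (Z 0 ω - r * τ 0 ω) ^ 2)
        = fun ω => Z 0 ω ^ 2 - 2 * r * (Z 0 ω * τ 0 ω) + r ^ 2 * τ 0 ω ^ 2 := by
      funext ω; ring
    have i2 : Integrable (fun ω => 2 * r * (Z 0 ω * τ 0 ω)) P := hZτint.const_mul (2 * r)
    have i3 : Integrable (fun ω => r ^ 2 * τ 0 ω ^ 2) P := hτ2.const_mul (r ^ 2)
    have i1 : Integrable (fun ω => Z 0 ω ^ 2 - 2 * r * (Z 0 ω * τ 0 ω)) P := hZ2.sub i2
    rw [heq, integral_add i1 i3, integral_sub hZ2 i2, integral_const_mul, integral_const_mul]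
  filter_upwards [hA, hB, hC, hD, hE] with ω hAω hBω hCω hDω hEω
  -- notation for partial-sum averages
  set a : ℕ → ℝ := fun n => (∑ i ∈ Finset.range n, Z i ω ^ 2) / n with ha
  set b : ℕ → ℝ := fun n => (∑ i ∈ Finset.range n, Z i ω * τ i ω) / n with hb
  set c : ℕ → ℝ := fun n => (∑ i ∈ Finset.range n, τ i ω ^ 2) / n with hc
  set d : ℕ → ℝ := fun n => (∑ i ∈ Finset.range n, Z i ω) / n with hd
  set e : ℕ → ℝ := fun n => (∑ i ∈ Finset.range n, τ i ω) / n with he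
  have haω : Tendsto a atTop (𝓝 A) := hAω
  have hbω : Tendsto b atTop (𝓝 B) := hBω
  have hcω : Tendsto c atTop (𝓝 C) := hCω
  have hdω : Tendsto d atTop (𝓝 EZ) := hDω
  have heω : Tendsto e atTop (𝓝 m) := hEω
  -- f̄ n ω = d n / e n
  have hfde : ∀ n, fbar n ω = d n / e n := by
    intro n
    rcases Nat.eq_zero_or_pos n with hn | hn
    · subst hn; simp [hfbar, hd, he]
    · have hn' : (n : ℝ) ≠ 0 := Nat.cast_ne_zero.2 hn.ne'
      rw [hfbar, hd, he, div_div_div_cancel_right₀]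
      exact hn'
  have hfω : Tendsto (fun n => fbar n ω) atTop (𝓝 r) := by
    have : Tendsto (fun n => d n / e n) atTop (𝓝 (EZ / m)) := hdω.div heω hmne
    rw [hr]
    exact Tendsto.congr (fun n => (hfde n).symm) this
  -- eventual identity for the estimator
  have hkey : ∀ n, 1 ≤ n → σhat2 n ω
      = (a n - 2 * fbar n ω * b n + fbar n ω ^ 2 * c n) / (e n) ^ 2 := by
    intro n hn
    have hn' : (n : ℝ) ≠ 0 := Nat.cast_ne_zero.2 (Nat.one_le_iff_ne_zero.1 hn)
    have hnum : (∑ i ∈ Finset.range n, (Z i ω - fbar n ω * τ i ω) ^ 2)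
        = (∑ i ∈ Finset.range n, Z i ω ^ 2)
          - 2 * fbar n ω * (∑ i ∈ Finset.range n, Z i ω * τ i ω)
          + fbar n ω ^ 2 * (∑ i ∈ Finset.range n, τ i ω ^ 2) := by
      rw [Finset.mul_sum, Finset.mul_sum, ← Finset.sum_sub_distrib, ← Finset.sum_add_distrib]
      exact Finset.sum_congr rfl fun i _ => by ring
    have hτe : τbar n ω = e n := by
      rw [hτbar, he, inv_mul_eq_div]
    rw [hσhat2, hnum, hτe, ha, hb, hc]
    simp only
    by_cases hen : e n = 0
    · simp [hen]
    · field_simp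
  have t1 : Tendsto (fun n => 2 * fbar n ω * b n) atTop (𝓝 (2 * r * B)) :=
    (hfω.const_mul 2).mul hbω
  have t2 : Tendsto (fun n => fbar n ω ^ 2 * c n) atTop (𝓝 (r ^ 2 * C)) :=
    (hfω.pow 2).mul hcω
  have hmain : Tendsto (fun n => (a n - 2 * fbar n ω * b n + fbar n ω ^ 2 * c n) / (e n) ^ 2)
      atTop (𝓝 ((A - 2 * r * B + r ^ 2 * C) / m ^ 2)) :=
    ((haω.sub t1).add t2).div (heω.pow 2) (pow_ne_zero 2 hmne)
  rw [hσ2']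
  refine Tendsto.congr' ?_ hmain
  filter_upwards [eventually_ge_atTop 1] with n hn
  exact (hkey n hn).symm
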